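/- Let f = f_{IG(μ,λ)} be an inverse Gaussian density with μ > 0 and λ > 0, and let c* be defined from f. Then for every c with 0 < c ≤ c*, one has −∫_c^∞ f(u) log f(u) du ≥ −∫_{c*}^∞ f(u) log f(u) du. -/

import Mathlib

open Classical

/-- The inverse Gaussian density. -/
noncomputable def igPdf (μ lam x : ℝ) : ℝ :=
  if 0 < x then
    Real.sqrt (lam / (2 * Real.pi * x ^ 3)) *
      Real.exp (-(lam * (x - μ) ^ 2) / (2 * μ ^ 2 * x))
  else 0

/-- `c* = 0` if `f(u) < 1` for all `u`, and `c* = inf {u | f u = 1}` otherwise. -/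
noncomputable def cstar (f : ℝ → ℝ) : ℝ :=
  if ∀ u, f u < 1 then 0 else sInf {u | f u = 1}

open Set MeasureTheory
lemma ig_pos {μ lam : ℝ} (hμ : 0 < μ) (hlam : 0 < lam) {x : ℝ} (hx : 0 < x) :
    0 < igPdf μ lam x := by
  rw [igPdf, if_pos hx]
  have : 0 < lam / (2 * Real.pi * x ^ 3) := by positivity
  positivity

lemma ig_contOn {μ : ℝ} (hμ : 0 < μ) (lam : ℝ) :
    ContinuousOn (igPdf μ lam) (Set.Ioi 0) := by
  have : ContinuousOn (fun x : ℝ => Real.sqrt (lam / (2 * Real.pi * x ^ 3)) *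
      Real.exp (-(lam * (x - μ) ^ 2) / (2 * μ ^ 2 * x))) (Set.Ioi 0) := by
    apply ContinuousOn.mul
    · apply ContinuousOn.sqrt
      apply ContinuousOn.div continuousOn_const (by fun_prop)
      intro x hx
      have : (0:ℝ) < x := hx
      positivity
    · apply ContinuousOn.rexp
      apply ContinuousOn.div (by fun_prop) (by fun_prop)
      intro x hx
      have : (0:ℝ) < x := hx
      positivity
  exact this.congr (fun x hx => by rw [igPdf, if_pos (by exact hx)])

/-- `|log t| ≤ t + 2 / √t` for `t > 0`. -/
lemma abs_log_le {t : ℝ} (ht : 0 < t) : |Real.log t| ≤ t + 2 / Real.sqrt t := by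
  have hst : 0 < Real.sqrt t := Real.sqrt_pos.2 ht
  rw [abs_le]
  constructor
  · have h1 : Real.log (Real.sqrt t)⁻¹ ≤ (Real.sqrt t)⁻¹ - 1 :=
      Real.log_le_sub_one_of_pos (by positivity)
    rw [Real.log_inv, Real.log_sqrt ht.le] at h1
    have : -Real.log t ≤ 2 / Real.sqrt t := by
      rw [div_eq_mul_inv]
      nlinarith [inv_pos.2 hst]
    nlinarith
  · have := Real.log_le_sub_one_of_pos ht
    have : 0 < 2 / Real.sqrt t := by positivity
    nlinarith [Real.log_le_sub_one_of_pos ht]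

/-- exponential lower bound: `(s/3)^3 ≤ exp s` for `s ≥ 0`. -/
lemma cube_le_exp {s : ℝ} (hs : 0 ≤ s) : (s / 3) ^ 3 ≤ Real.exp s := by
  have h1 : s / 3 ≤ Real.exp (s / 3) := by
    nlinarith [Real.add_one_le_exp (s / 3)]
  calc (s / 3) ^ 3 ≤ Real.exp (s / 3) ^ 3 := by
        apply pow_le_pow_left₀ (by positivity) h1
    _ = Real.exp s := by
        rw [← Real.exp_nat_mul]; norm_num; ring_nf

lemma ig_exists_lt_one {μ lam : ℝ} (hμ : 0 < μ) (hlam : 0 < lam) {u : ℝ} (hu : 0 < u) :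
    ∃ p, 0 < p ∧ p < u ∧ igPdf μ lam p < 1 := by
  set k := lam / (2 * μ ^ 2) with hk
  have hkpos : 0 < k := by positivity
  set K := Real.sqrt (lam / (2 * Real.pi)) * Real.exp (2 * k * μ) * (27 / (k * μ ^ 2) ^ 3)
    with hKdef
  have hKpos : 0 < K := by
    have h2 : 0 < lam / (2 * Real.pi) := by positivity
    positivity
  set p := min (u / 2) (min 1 (1 / (K + 1))) with hpdef
  have hp0 : 0 < p := by positivity
  have hpu : p < u := lt_of_le_of_lt (min_le_left _ _) (by linarith)
  have hp1 : p ≤ 1 := le_trans (min_le_right _ _) (min_le_left _ _)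
  have hpK : p ≤ 1 / (K + 1) := le_trans (min_le_right _ _) (min_le_right _ _)
  refine ⟨p, hp0, hpu, ?_⟩
  have hinv : 1 ≤ 1 / p := by
    rw [le_div_iff₀ hp0]; linarith
  -- bound for the sqrt factor
  have hsq : Real.sqrt (lam / (2 * Real.pi * p ^ 3))
      ≤ Real.sqrt (lam / (2 * Real.pi)) * (1 / p) ^ 2 := by
    have he : lam / (2 * Real.pi * p ^ 3) = (lam / (2 * Real.pi)) * (1 / p) ^ 3 := by
      field_simp
    rw [he, Real.sqrt_mul (by positivity)]
    apply mul_le_mul_of_nonneg_left _ (Real.sqrt_nonneg _)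
    have h34 : (1 / p) ^ 3 ≤ ((1 / p) ^ 2) ^ 2 := by
      calc (1/p)^3 ≤ (1/p)^4 := pow_le_pow_right₀ hinv (by norm_num)
        _ = ((1/p)^2)^2 := by ring
    calc Real.sqrt ((1/p)^3) ≤ Real.sqrt (((1/p)^2)^2) := Real.sqrt_le_sqrt h34
      _ = (1/p)^2 := Real.sqrt_sq (by positivity)
  -- bound for the exp factor
  have hkl : k * (2 * μ ^ 2) = lam := by rw [hk]; exact div_mul_cancel₀ _ (by positivity)
  have hexparg : -(lam * (p - μ) ^ 2) / (2 * μ ^ 2 * p)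
      = -(k * μ ^ 2 / p) + 2 * k * μ - k * p := by
    rw [← hkl]; field_simp; ring
  have hexp1 : Real.exp (-(lam * (p - μ) ^ 2) / (2 * μ ^ 2 * p))
      ≤ Real.exp (2 * k * μ) * Real.exp (-(k * μ ^ 2 / p)) := by
    rw [hexparg, ← Real.exp_add]
    apply Real.exp_le_exp.2
    nlinarith
  -- e^{-s} ≤ 27/s³
  have hspos : 0 < k * μ ^ 2 / p := by positivity
  have hexp2 : Real.exp (-(k * μ ^ 2 / p)) ≤ 27 * p ^ 3 / (k * μ ^ 2) ^ 3 := by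
    have h1 : ((k * μ ^ 2 / p) / 3) ^ 3 ≤ Real.exp (k * μ ^ 2 / p) := cube_le_exp hspos.le
    rw [Real.exp_neg]
    rw [inv_le_iff_one_le_mul₀ (by positivity)]  -- may need adjusting
    calc (1:ℝ) = ((k * μ ^ 2 / p) / 3) ^ 3 * (27 * p ^ 3 / (k * μ ^ 2) ^ 3) := by
          field_simp; ring
      _ ≤ Real.exp (k * μ ^ 2 / p) * (27 * p ^ 3 / (k * μ ^ 2) ^ 3) := by
          apply mul_le_mul_of_nonneg_right h1 (by positivity)
      _ = 27 * p ^ 3 / (k * μ ^ 2) ^ 3 * Real.exp (k * μ ^ 2 / p) := by ring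
  -- combine
  have hfp : igPdf μ lam p ≤ K * p := by
    rw [igPdf, if_pos hp0]
    calc Real.sqrt (lam / (2 * Real.pi * p ^ 3)) *
          Real.exp (-(lam * (p - μ) ^ 2) / (2 * μ ^ 2 * p))
        ≤ (Real.sqrt (lam / (2 * Real.pi)) * (1 / p) ^ 2) *
          (Real.exp (2 * k * μ) * (27 * p ^ 3 / (k * μ ^ 2) ^ 3)) := by
          apply mul_le_mul hsq _ (Real.exp_nonneg _) (by positivity)
          exact le_trans hexp1 (mul_le_mul_of_nonneg_left hexp2 (Real.exp_nonneg _))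
      _ = K * p := by rw [hKdef]; field_simp
  have : K * p ≤ K * (1 / (K + 1)) := mul_le_mul_of_nonneg_left hpK hKpos.le
  have hlt1 : K * (1 / (K + 1)) < 1 := by
    rw [mul_one_div, div_lt_one (by linarith)]; linarith
  linarith

lemma ig_le_one_of_le_cstar {μ lam : ℝ} (hμ : 0 < μ) (hlam : 0 < lam) {u : ℝ}
    (hu0 : 0 < u) (hu : u ≤ cstar (igPdf μ lam)) : igPdf μ lam u ≤ 1 := by
  by_contra hgt
  push_neg at hgt
  rw [cstar] at hu
  split_ifs at hu with hall
  · exact absurd hu (not_le.2 hu0)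
  · obtain ⟨p, hp0, hpu, hplt⟩ := ig_exists_lt_one hμ hlam hu0
    have hcont : ContinuousOn (igPdf μ lam) (Icc p u) :=
      (ig_contOn hμ lam).mono (fun x hx => lt_of_lt_of_le hp0 hx.1)
    have hmem : (1:ℝ) ∈ Icc (igPdf μ lam p) (igPdf μ lam u) := ⟨hplt.le, hgt.le⟩
    obtain ⟨t, ht, hft⟩ := intermediate_value_Icc hpu.le hcont hmem
    have hbdd : BddBelow {u | igPdf μ lam u = 1} := by
      refine ⟨0, fun x hx => ?_⟩
      by_contra hx0
      push_neg at hx0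
      rw [Set.mem_setOf_eq, igPdf, if_neg (not_lt.2 hx0.le)] at hx
      norm_num at hx
    have h1 : sInf {u | igPdf μ lam u = 1} ≤ t := csInf_le hbdd hft
    have htu : t < u := lt_of_le_of_ne ht.2 (fun h => by rw [h] at hft; linarith)
    linarith

lemma ig_decay {μ lam : ℝ} (hμ : 0 < μ) (hlam : 0 < lam) {a x : ℝ} (ha : 0 < a)
    (hx : a ≤ x) :
    igPdf μ lam x ≤ (Real.sqrt (lam / (2 * Real.pi * a ^ 3)) *
      Real.exp (2 * (lam / (2 * μ ^ 2)) * μ)) * Real.exp (-(lam / (2 * μ ^ 2)) * x) := by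
  set k := lam / (2 * μ ^ 2) with hk
  have hkpos : 0 < k := by positivity
  have hx0 : 0 < x := lt_of_lt_of_le ha hx
  rw [igPdf, if_pos hx0]
  have hsq : Real.sqrt (lam / (2 * Real.pi * x ^ 3))
      ≤ Real.sqrt (lam / (2 * Real.pi * a ^ 3)) := by
    apply Real.sqrt_le_sqrt
    apply div_le_div_of_nonneg_left hlam.le (by positivity)
    have : a ^ 3 ≤ x ^ 3 := pow_le_pow_left₀ ha.le hx 3
    nlinarith [Real.pi_pos]
  have hkl : k * (2 * μ ^ 2) = lam := by rw [hk]; exact div_mul_cancel₀ _ (by positivity)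
  have hexp : Real.exp (-(lam * (x - μ) ^ 2) / (2 * μ ^ 2 * x))
      ≤ Real.exp (2 * k * μ) * Real.exp (-k * x) := by
    rw [← Real.exp_add]
    apply Real.exp_le_exp.2
    rw [div_le_iff₀ (by positivity), ← hkl]
    nlinarith [sq_nonneg μ, sq_nonneg (x - μ)]
  calc Real.sqrt (lam / (2 * Real.pi * x ^ 3)) *
        Real.exp (-(lam * (x - μ) ^ 2) / (2 * μ ^ 2 * x))
      ≤ Real.sqrt (lam / (2 * Real.pi * a ^ 3)) *
        (Real.exp (2 * k * μ) * Real.exp (-k * x)) :=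
        mul_le_mul hsq hexp (Real.exp_nonneg _) (Real.sqrt_nonneg _)
    _ = (Real.sqrt (lam / (2 * Real.pi * a ^ 3)) * Real.exp (2 * k * μ)) *
        Real.exp (-k * x) := by ring

lemma ig_integrableOn_mul_log {μ lam : ℝ} (hμ : 0 < μ) (hlam : 0 < lam) {a : ℝ}
    (ha : 0 < a) :
    IntegrableOn (fun u => igPdf μ lam u * Real.log (igPdf μ lam u)) (Set.Ioi a) := by
  set k := lam / (2 * μ ^ 2) with hk
  have hkpos : 0 < k := by positivity
  set C := Real.sqrt (lam / (2 * Real.pi * a ^ 3)) * Real.exp (2 * k * μ) with hC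
  have hCpos : 0 < C := by
    have : 0 < lam / (2 * Real.pi * a ^ 3) := by positivity
    positivity
  apply Integrable.mono'
    (g := fun x => (C ^ 2 + 2 * Real.sqrt C) * Real.exp (-(k / 2) * x))
  · exact (exp_neg_integrableOn_Ioi a (by positivity)).const_mul _
  · have hcont : ContinuousOn
        (fun u => igPdf μ lam u * Real.log (igPdf μ lam u)) (Set.Ioi 0) :=
      (ig_contOn hμ lam).mul ((ig_contOn hμ lam).log
        (fun x hx => (ig_pos hμ hlam hx).ne'))
    exact (hcont.mono (fun x hx => lt_trans ha hx)).aestronglyMeasurable measurableSet_Ioi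
  · filter_upwards [ae_restrict_mem measurableSet_Ioi] with x hx
    have hax : a ≤ x := le_of_lt hx
    have hx0 : 0 < x := lt_of_lt_of_le ha hax
    set f := igPdf μ lam x with hf
    have hfpos : 0 < f := ig_pos hμ hlam hx0
    have hfb : f ≤ C * Real.exp (-k * x) := ig_decay hμ hlam ha hax
    have hEb : Real.exp (-k * x) ≤ Real.exp (-(k / 2) * x) :=
      Real.exp_le_exp.2 (by nlinarith)
    have hE1 : Real.exp (-k * x) ≤ 1 := Real.exp_le_one_iff.2 (by nlinarith)
    -- ‖f log f‖ ≤ f² + 2√f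
    have habs : ‖f * Real.log f‖ ≤ f ^ 2 + 2 * Real.sqrt f := by
      rw [norm_mul, Real.norm_eq_abs, Real.norm_eq_abs, abs_of_pos hfpos]
      calc f * |Real.log f| ≤ f * (f + 2 / Real.sqrt f) :=
            mul_le_mul_of_nonneg_left (abs_log_le hfpos) hfpos.le
        _ = f ^ 2 + 2 * (f / Real.sqrt f) := by ring
        _ = f ^ 2 + 2 * Real.sqrt f := by rw [Real.div_sqrt]
    have hsq1 : f ^ 2 ≤ C ^ 2 * Real.exp (-(k / 2) * x) := by
      calc f ^ 2 ≤ (C * Real.exp (-k * x)) ^ 2 := by nlinarith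
        _ = C ^ 2 * (Real.exp (-k * x) * Real.exp (-k * x)) := by ring
        _ ≤ C ^ 2 * (1 * Real.exp (-(k / 2) * x)) := by
            apply mul_le_mul_of_nonneg_left _ (by positivity)
            exact mul_le_mul hE1 hEb (Real.exp_nonneg _) one_pos.le
        _ = C ^ 2 * Real.exp (-(k / 2) * x) := by ring
    have hsq2 : Real.sqrt f ≤ Real.sqrt C * Real.exp (-(k / 2) * x) := by
      calc Real.sqrt f ≤ Real.sqrt (C * Real.exp (-k * x)) := Real.sqrt_le_sqrt hfb
        _ = Real.sqrt C * Real.sqrt (Real.exp (-k * x)) :=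
            Real.sqrt_mul hCpos.le _
        _ = Real.sqrt C * Real.exp (-k * x / 2) := by rw [← Real.exp_half]
        _ = Real.sqrt C * Real.exp (-(k / 2) * x) := by ring_nf
    calc ‖f * Real.log f‖ ≤ f ^ 2 + 2 * Real.sqrt f := habs
      _ ≤ C ^ 2 * Real.exp (-(k / 2) * x) + 2 * (Real.sqrt C * Real.exp (-(k / 2) * x)) := by
          linarith
      _ = (C ^ 2 + 2 * Real.sqrt C) * Real.exp (-(k / 2) * x) := by ring

/-- for an inverse Gaussian density `f` and every `c` with `0 < c ≤ c*`,
`−∫_c^∞ f log f ≥ −∫_{c*}^∞ f log f`. -/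
theorem tail_entropy_integral_ge (μ lam : ℝ) (hμ : 0 < μ) (hlam : 0 < lam)
    (c : ℝ) (hc : 0 < c) (hcc : c ≤ cstar (igPdf μ lam)) :
    -∫ u in Set.Ioi c, igPdf μ lam u * Real.log (igPdf μ lam u)
      ≥ -∫ u in Set.Ioi (cstar (igPdf μ lam)), igPdf μ lam u * Real.log (igPdf μ lam u) := by
  set cs := cstar (igPdf μ lam) with hcs
  have hcst : 0 < cs := lt_of_lt_of_le hc hcc
  rcases eq_or_lt_of_le hcc with heq | hlt
  · rw [heq]
  · have hsplit : Set.Ioi c = Set.Ioc c cs ∪ Set.Ioi cs :=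
      (Set.Ioc_union_Ioi_eq_Ioi hcc).symm
    have hi1 : IntegrableOn (fun u => igPdf μ lam u * Real.log (igPdf μ lam u))
        (Set.Ioc c cs) :=
      (ig_integrableOn_mul_log hμ hlam hc).mono_set Set.Ioc_subset_Ioi_self
    have hi2 : IntegrableOn (fun u => igPdf μ lam u * Real.log (igPdf μ lam u))
        (Set.Ioi cs) := ig_integrableOn_mul_log hμ hlam hcst
    rw [hsplit, setIntegral_union (Set.Ioc_disjoint_Ioi le_rfl) measurableSet_Ioi hi1 hi2]
    have hneg : ∫ u in Set.Ioc c cs, igPdf μ lam u * Real.log (igPdf μ lam u) ≤ 0 := by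
      apply setIntegral_nonpos measurableSet_Ioc
      intro x hx
      have hx0 : 0 < x := lt_trans hc hx.1
      have hle1 : igPdf μ lam x ≤ 1 := ig_le_one_of_le_cstar hμ hlam hx0 hx.2
      have hlog : Real.log (igPdf μ lam x) ≤ 0 :=
        Real.log_nonpos (ig_pos hμ hlam hx0).le hle1
      exact mul_nonpos_of_nonneg_of_nonpos (ig_pos hμ hlam hx0).le hlog
    linarith
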